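/- For the Gairing mechanism f* (as defined), the quantity 1 + max_{j∈[1,n-1]} max(j*f*(j) - f*(j+1), (n-1)*f*(n)) equals 1 + (n-1)*f*(n), i.e., for all j ∈ [1,n-1], j*f*(j) - f*(j+1) = (n-1)*f*(n). -/

import Mathlib

/-- The Gairing optimal covering mechanism. -/
noncomputable def gairing (n j : ℕ) : ℝ :=
  (Nat.factorial (j - 1) : ℝ) *
    (1 / (((n - 1 : ℕ) : ℝ) * (Nat.factorial (n - 1) : ℝ)) +
      ∑ i ∈ Finset.Icc j (n - 1), (1 : ℝ) / (Nat.factorial i : ℝ)) /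
    (1 / (((n - 1 : ℕ) : ℝ) * (Nat.factorial (n - 1) : ℝ)) +
      ∑ i ∈ Finset.Icc 1 (n - 1), (1 : ℝ) / (Nat.factorial i : ℝ))

lemma key (n : ℕ) (hn : 2 ≤ n) (j : ℕ) (hj1 : 1 ≤ j) (hj2 : j ≤ n - 1) :
    (j : ℝ) * gairing n j - gairing n (j + 1) = ((n : ℝ) - 1) * gairing n n := by
  unfold gairing
  have h1 : j + 1 - 1 = j := rfl
  rw [h1]
  set A : ℝ := 1 / (((n - 1 : ℕ) : ℝ) * (Nat.factorial (n - 1) : ℝ)) with hA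
  set D : ℝ := A + ∑ i ∈ Finset.Icc 1 (n - 1), (1 : ℝ) / (Nat.factorial i : ℝ)
  have hempty : Finset.Icc n (n - 1) = ∅ := Finset.Icc_eq_empty (by omega)
  have hsplit : ∑ i ∈ Finset.Icc j (n - 1), (1 : ℝ) / (Nat.factorial i : ℝ) =
      1 / (Nat.factorial j : ℝ) + ∑ i ∈ Finset.Icc (j + 1) (n - 1), (1 : ℝ) / (Nat.factorial i : ℝ) := by
    rw [Finset.Icc_eq_cons_Ioc hj2, Finset.sum_cons, ← Finset.Icc_add_one_left_eq_Ioc]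
  rw [hempty, hsplit, Finset.sum_empty]
  have hjf : (j : ℝ) * (Nat.factorial (j - 1) : ℝ) = (Nat.factorial j : ℝ) := by
    rw [← Nat.cast_mul, Nat.mul_factorial_pred (by omega)]
  have hnc : ((n : ℝ) - 1) = ((n - 1 : ℕ) : ℝ) := by
    rw [Nat.cast_sub (by omega)]; norm_num
  have hne1 : ((n - 1 : ℕ) : ℝ) * (Nat.factorial (n - 1) : ℝ) ≠ 0 := by
    have h1 : (0:ℕ) < n - 1 := by omega
    have h2 := Nat.factorial_pos (n - 1)
    exact ne_of_gt (mul_pos (by exact_mod_cast h1) (by exact_mod_cast h2))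
  have hne2 : (Nat.factorial j : ℝ) ≠ 0 := by
    exact_mod_cast (Nat.factorial_pos j).ne'
  rw [hnc]
  rw [mul_div_assoc', mul_div_assoc', div_sub_div_same]
  congr 1
  rw [← mul_assoc, hjf, add_zero, ← mul_assoc, hA]
  have e1 : ((n - 1 : ℕ) : ℝ) * (Nat.factorial (n - 1) : ℝ) *
      (1 / (((n - 1 : ℕ) : ℝ) * (Nat.factorial (n - 1) : ℝ))) = 1 := mul_one_div_cancel hne1
  have e2 : (Nat.factorial j : ℝ) * (1 / (Nat.factorial j : ℝ)) = 1 := mul_one_div_cancel hne2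
  linear_combination e2 - e1

theorem stmt_13 (n : ℕ) (hn : 2 ≤ n) :
    (∀ j, 1 ≤ j → j ≤ n - 1 →
      (j : ℝ) * gairing n j - gairing n (j + 1) = ((n : ℝ) - 1) * gairing n n) ∧
    1 + (Finset.Icc 1 (n - 1)).sup'
        (Finset.nonempty_Icc.mpr (by omega))
        (fun j => max ((j : ℝ) * gairing n j - gairing n (j + 1))
          (((n : ℝ) - 1) * gairing n n)) =
      1 + ((n : ℝ) - 1) * gairing n n := by
  refine ⟨key n hn, ?_⟩
  congr 1
  rw [Finset.sup'_congr _ rfl (fun j hj => ?_)]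
  · exact Finset.sup'_const _ _
  · simp only [Finset.mem_Icc] at hj
    rw [key n hn j hj.1 hj.2, max_self]
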